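/- Let U be a set of paths in ℝ^d that is closed under concatenation: X ⊔ Y ∈ U for all X, Y ∈ U. Then the Zariski closure 𝒱(ℐ(U)) of U is closed under concatenation: if X, Y ∈ 𝒱(ℐ(U)) then X ⊔ Y ∈ 𝒱(ℐ(U)). -/

import Mathlib

open scoped BigOperators TensorProduct

namespace PathVarieties

/-- Words over an alphabet `α`; the letters `{1,…,d}` of `ℝ^d` correspond to `α = Fin d`. -/
abbrev Word (α : Type*) := List α

/-- The tensor algebra `T(ℝ^d)`, identified with the free real vector space on words. -/
abbrev TA (α : Type*) := Word α →₀ ℝ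

/-- The list of all (riffle) shuffles of two words. -/
def shuffles {α : Type*} : Word α → Word α → List (Word α)
  | [], v => [v]
  | a :: u, [] => [a :: u]
  | a :: u, b :: v =>
      ((shuffles u (b :: v)).map (a :: ·)) ++ ((shuffles (a :: u) v).map (b :: ·))
termination_by u v => u.length + v.length
decreasing_by all_goals (simp only [List.length_cons]; omega)

/-- Shuffle product of two words, as an element of `T(ℝ^d)`. -/
noncomputable def shw {α : Type*} (u v : Word α) : TA α :=
  ((shuffles u v).map fun w => Finsupp.single w (1 : ℝ)).sum

/-- The shuffle product `⧢` on `T(ℝ^d)`, the bilinear extension of the shuffle of words. -/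
noncomputable def sh {α : Type*} (x y : TA α) : TA α :=
  x.sum fun u cu => y.sum fun v cv => (cu * cv) • shw u v

/-- Right halfshuffle `u ≻ v` of words (`v` nonempty): shuffle `u` with `v` minus its
last letter, then append the last letter of `v`.  (This is the unique bilinear operation
with `w ≻ a = wa` and `w ≻ (va) = (w≻v + v≻w)a`.) -/
noncomputable def rshw {α : Type*} (u v : Word α) : TA α :=
  ((shuffles u v.dropLast).map fun w =>
    Finsupp.single (w ++ v.drop (v.length - 1)) (1 : ℝ)).sum

/-- Right halfshuffle `≻` on `T^{≥1}(ℝ^d)`, extended bilinearly. -/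
noncomputable def rsh {α : Type*} (x y : TA α) : TA α :=
  x.sum fun u cu => y.sum fun v cv => (cu * cv) • rshw u v

/-- Left halfshuffle `u ≺ v` of words (`u` nonempty): the first letter of `u` followed by
the shuffle of the rest of `u` with `v`.  (This is the unique bilinear operation with
`a ≺ w = aw` and `(av) ≺ w = a(w≺v + v≺w)`.) -/
noncomputable def lshw {α : Type*} (u v : Word α) : TA α :=
  ((shuffles u.tail v).map fun w => Finsupp.single (u.take 1 ++ w) (1 : ℝ)).sum

/-- Left halfshuffle `≺` on `T^{≥1}(ℝ^d)`, extended bilinearly. -/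
noncomputable def lsh {α : Type*} (x y : TA α) : TA α :=
  x.sum fun u cu => y.sum fun v cv => (cu * cv) • lshw u v

/-- The antipode `𝒜`, with `𝒜(i₁⋯iₙ) = (−1)ⁿ iₙ⋯i₁`. -/
noncomputable def antipode {α : Type*} (x : TA α) : TA α :=
  x.sum fun w c => Finsupp.single w.reverse (((-1 : ℝ) ^ w.length) * c)

/-- Helper for `Λ_B`: value on a reversed word. -/
noncomputable def lamRev {α β : Type*} (B : α → TA β) : Word α → TA β
  | [] => Finsupp.single [] 1
  | [i] => B i
  | i :: w => rsh (lamRev B w) (B i)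

/-- `Λ_B` on a word: `Λ_B e = e`, `Λ_B i = B i`, `Λ_B (w·i) = (Λ_B w) ≻ (Λ_B i)`. -/
noncomputable def lamW {α β : Type*} (B : α → TA β) (w : Word α) : TA β :=
  lamRev B w.reverse

/-- The linear map `Λ_B : T(ℝ^t) → T(ℝ^d)` induced by `B` on letters. -/
noncomputable def Lam {α β : Type*} (B : α → TA β) (x : TA α) : TA β :=
  x.sum fun w c => c • lamW B w

/-- `splitEmb e j n w = Σ_{w = u₁⋯uₙ} e_j(u₁) ⧢ e_{j+1}(u₂) ⧢ ⋯ ⧢ e_{j+n−1}(uₙ)`,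
the sum over all splittings of `w` into `n` consecutive (possibly empty) factors,
each factor relabelled letterwise by `e`. -/
noncomputable def splitEmb {α β : Type*} (e : ℕ → α → β) : ℕ → ℕ → Word α → TA β
  | _, 0, w => if w.isEmpty then Finsupp.single ([] : Word β) (1 : ℝ) else 0
  | j, k + 1, w => ∑ m ∈ Finset.range (w.length + 1),
      sh (Finsupp.single ((w.take m).map (e j)) (1 : ℝ)) (splitEmb e (j + 1) k (w.drop m))

/-- `Σ_{x=uv} f(u)·v`: deconcatenate, evaluate the functional `f` on prefixes. -/
noncomputable def leftAct {α : Type*} (f : Word α → ℝ) (x : TA α) : TA α :=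
  x.sum fun w c => c • ∑ k ∈ Finset.range (w.length + 1),
    f (w.take k) • Finsupp.single (w.drop k) (1 : ℝ)

/-- `Σ_{x=uv} u·f(v)`: deconcatenate, evaluate the functional `f` on suffixes. -/
noncomputable def rightAct {α : Type*} (f : Word α → ℝ) (x : TA α) : TA α :=
  x.sum fun w c => c • ∑ k ∈ Finset.range (w.length + 1),
    f (w.drop k) • Finsupp.single (w.take k) (1 : ℝ)

/-- A raw path: a time horizon `T` together with a map `ℝ → ℝ^α`
(only the restriction to `[0,T]` is relevant). -/
structure RawPath (α : Type*) where
  T : ℝ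
  toFun : ℝ → α → ℝ

/-- A path: positive time horizon, continuous on `[0,T]` and piecewise continuously
differentiable there (witnessed by a partition `0 = τ₀ < τ₁ < ⋯ < τₙ = T`). -/
def IsPath {α : Type*} (X : RawPath α) : Prop :=
  0 < X.T ∧ (∀ i, ContinuousOn (fun t => X.toFun t i) (Set.Icc 0 X.T)) ∧
    ∃ (n : ℕ) (τ : Fin (n + 1) → ℝ), StrictMono τ ∧ τ 0 = 0 ∧ τ (Fin.last n) = X.T ∧
      ∀ (k : Fin n) (i : α), ContDiffOn ℝ 1 (fun t => X.toFun t i)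
        (Set.Icc (τ k.castSucc) (τ k.succ))

/-- Iterated integrals, by recursion on the reversed word:
`sigRev X (i :: w) t = ∫₀ᵗ ⟨σ(X)ₛ, w.reverse⟩ dX⁽ⁱ⁾(s)`. -/
noncomputable def sigRev {α : Type*} (X : ℝ → α → ℝ) : Word α → ℝ → ℝ
  | [], _ => 1
  | i :: w, t => ∫ s in (0 : ℝ)..t, sigRev X w s * deriv (fun u => X u i) s

/-- `⟨σ(X)_t, w⟩`, the iterated-integrals signature of `X` stopped at time `t`. -/
noncomputable def sigUpTo {α : Type*} (X : RawPath α) (t : ℝ) (w : Word α) : ℝ :=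
  sigRev X.toFun w.reverse t

/-- `⟨σ(X), w⟩`, the iterated-integrals signature of the path `X` at a word `w`. -/
noncomputable def sig {α : Type*} (X : RawPath α) (w : Word α) : ℝ :=
  sigUpTo X X.T w

/-- Pairing of a word-indexed functional with an element of `T(ℝ^d)`. -/
noncomputable def pairF {α : Type*} (f : Word α → ℝ) (x : TA α) : ℝ :=
  x.sum fun w c => c * f w

/-- `⟨σ(X), x⟩` for a tensor `x ∈ T(ℝ^d)` (linear in `x`). -/
noncomputable def pair {α : Type*} (X : RawPath α) (x : TA α) : ℝ :=
  Finsupp.linearCombination ℝ (sig X) x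

/-- The path variety `𝒱(W)` of all paths whose signature kills every element of `W`. -/
def V {α : Type*} (W : Set (TA α)) : Set (RawPath α) :=
  {X | IsPath X ∧ ∀ x ∈ W, pair X x = 0}

/-- `ℐ(M)`, the space of tensors killed by the signature of every path in `M`. -/
noncomputable def Idl {α : Type*} (M : Set (RawPath α)) : Submodule ℝ (TA α) :=
  ⨅ X ∈ M, LinearMap.ker (Finsupp.linearCombination ℝ (sig X))

/-- Concatenation `X ⊔ Y` of paths. -/
noncomputable def concat {α : Type*} (X Y : RawPath α) : RawPath α where
  T := X.T + Y.T
  toFun := fun t i =>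
    if t ≤ X.T then X.toFun t i else Y.toFun (t - X.T) i + X.toFun X.T i - Y.toFun 0 i

/-- Time reversal `⟵X`. -/
def timeRev {α : Type*} (X : RawPath α) : RawPath α :=
  ⟨X.T, fun t i => X.toFun (X.T - t) i⟩

/-- `concatIter X n = X^{⊔(n+1)}`. -/
noncomputable def concatIter {α : Type*} (X : RawPath α) : ℕ → RawPath α
  | 0 => X
  | n + 1 => concat (concatIter X n) X

/-- `X^{⊔n}`, the `n`-fold concatenation of `X` with itself (intended for `n ≥ 1`). -/
noncomputable def concatPow {α : Type*} (X : RawPath α) (n : ℕ) : RawPath α :=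
  concatIter X (n - 1)

/-- `concatFold f k = f 0 ⊔ f 1 ⊔ ⋯ ⊔ f k`. -/
noncomputable def concatFold {α : Type*} (f : ℕ → RawPath α) : ℕ → RawPath α
  | 0 => f 0
  | k + 1 => concat (concatFold f k) (f (k + 1))

/-- The deconcatenation coproduct `Δ : T(ℝ^d) → T(ℝ^d) ⊗ T(ℝ^d)`,
`Δw = Σ_{w=uv} u ⊗ v`. -/
noncomputable def deconc {α : Type*} (x : TA α) : TensorProduct ℝ (TA α) (TA α) :=
  x.sum fun w c => c • ∑ k ∈ Finset.range (w.length + 1),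
    (Finsupp.single (w.take k) (1 : ℝ)) ⊗ₜ[ℝ] (Finsupp.single (w.drop k) (1 : ℝ))

/-! ### Auxiliary development for statement17 -/

open MeasureTheory Set intervalIntegral

section Aux

variable {α : Type*}

private lemma ae_ne_const (c : ℝ) : ∀ᵐ x : ℝ, x ≠ c := by
  rw [MeasureTheory.ae_iff]
  simp only [ne_eq, not_not, Set.setOf_eq_eq_singleton]
  exact measure_singleton c

/-- Unfolding lemma for `sigRev` on a cons. -/
lemma sigRev_cons (Xf : ℝ → α → ℝ) (i : α) (w : Word α) (t : ℝ) :
    sigRev Xf (i :: w) t = ∫ s in (0:ℝ)..t, sigRev Xf w s * deriv (fun u => Xf u i) s := rfl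

lemma sigRev_nil (Xf : ℝ → α → ℝ) (t : ℝ) : sigRev Xf ([] : Word α) t = 1 := rfl

private lemma deriv_piece_integrable {f : ℝ → ℝ} {a b : ℝ} (hab : a < b)
    (hf : ContDiffOn ℝ 1 f (Set.Icc a b)) :
    IntervalIntegrable (deriv f) volume a b := by
  have hg : ContinuousOn (derivWithin f (Set.Icc a b)) (Set.Icc a b) :=
    hf.continuousOn_derivWithin (uniqueDiffOn_Icc hab) le_rfl
  have hint : IntervalIntegrable (derivWithin f (Set.Icc a b)) volume a b := by
    apply ContinuousOn.intervalIntegrable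
    rwa [Set.uIcc_of_le hab.le]
  apply hint.congr_ae
  rw [Filter.EventuallyEq, MeasureTheory.ae_restrict_iff' measurableSet_uIoc]
  filter_upwards [ae_ne_const b] with x hxb hxmem
  rw [Set.uIoc_of_le hab.le] at hxmem
  have hx : x ∈ Set.Ioo a b := ⟨hxmem.1, lt_of_le_of_ne hxmem.2 hxb⟩
  exact derivWithin_of_mem_nhds (Icc_mem_nhds hx.1 hx.2)

lemma deriv_intervalIntegrable {X : RawPath α} (hX : IsPath X) (i : α) :
    IntervalIntegrable (deriv fun t => X.toFun t i) volume 0 X.T := by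
  obtain ⟨hT, hcont, n, τ, hmono, hτ0, hτlast, hC1⟩ := hX
  have key : ∀ j : ℕ, ∀ hj : j ≤ n,
      IntervalIntegrable (deriv fun t => X.toFun t i) volume (τ 0) (τ ⟨j, by omega⟩) := by
    intro j
    induction j with
    | zero =>
      intro _
      have : τ (⟨0, by omega⟩ : Fin (n+1)) = τ 0 := rfl
      rw [this]
    | succ m ih =>
      intro hj
      refine (ih (by omega)).trans ?_
      have hk := hC1 ⟨m, by omega⟩ i
      have hab : τ (⟨m, by omega⟩ : Fin n).castSucc < τ (⟨m, by omega⟩ : Fin n).succ :=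
        hmono Fin.castSucc_lt_succ
      exact deriv_piece_integrable hab hk
  have := key n le_rfl
  have h1 : τ (⟨n, by omega⟩ : Fin (n+1)) = τ (Fin.last n) := rfl
  rw [hτ0, h1, hτlast] at this
  exact this

lemma deriv_intervalIntegrable' {X : RawPath α} (hX : IsPath X) (i : α) {a b : ℝ}
    (ha : a ∈ Set.Icc 0 X.T) (hb : b ∈ Set.Icc 0 X.T) :
    IntervalIntegrable (deriv fun t => X.toFun t i) volume a b := by
  apply (deriv_intervalIntegrable hX i).mono_set
  rw [Set.uIcc_of_le hX.1.le]
  exact Set.uIcc_subset_Icc ha hb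

/-- Mutual continuity/integrability of the iterated integrals of a path. -/
lemma sigRev_aux {X : RawPath α} (hX : IsPath X) (w : Word α) :
    ContinuousOn (sigRev X.toFun w) (Set.Icc 0 X.T) ∧
      ∀ i, IntervalIntegrable
        (fun s => sigRev X.toFun w s * deriv (fun u => X.toFun u i) s) volume 0 X.T := by
  have hT : (0:ℝ) ≤ X.T := hX.1.le
  induction w with
  | nil =>
    constructor
    · exact (continuousOn_const : ContinuousOn (fun _ => (1:ℝ)) (Set.Icc 0 X.T))
    · intro i
      have := deriv_intervalIntegrable hX i
      simpa [sigRev_nil, one_mul] using this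
  | cons i w ih =>
    have hcont : ContinuousOn (sigRev X.toFun (i :: w)) (Set.Icc 0 X.T) := by
      have h := intervalIntegral.continuousOn_primitive_interval'
        (ih.2 i) (left_mem_uIcc (a := (0:ℝ)) (b := X.T))
      rw [Set.uIcc_of_le hT] at h
      exact h
    refine ⟨hcont, fun j => ?_⟩
    apply IntervalIntegrable.continuousOn_mul (deriv_intervalIntegrable hX j)
    rwa [Set.uIcc_of_le hT]

lemma sigRev_intervalIntegrable {X : RawPath α} (hX : IsPath X) (w : Word α) (i : α) {a b : ℝ}
    (ha : a ∈ Set.Icc 0 X.T) (hb : b ∈ Set.Icc 0 X.T) :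
    IntervalIntegrable
      (fun s => sigRev X.toFun w s * deriv (fun u => X.toFun u i) s) volume a b := by
  apply ((sigRev_aux hX w).2 i).mono_set
  rw [Set.uIcc_of_le hX.1.le]
  exact Set.uIcc_subset_Icc ha hb

end Aux

section Concat

variable {α : Type*} {X Y : RawPath α}

lemma concat_toFun_left {t : ℝ} (h : t ≤ X.T) (i : α) :
    (concat X Y).toFun t i = X.toFun t i := if_pos h

lemma concat_toFun_right {t : ℝ} (h : X.T ≤ t) (i : α) :
    (concat X Y).toFun t i = Y.toFun (t - X.T) i + X.toFun X.T i - Y.toFun 0 i := by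
  rcases eq_or_lt_of_le h with rfl | h
  · show (if X.T ≤ X.T then X.toFun X.T i else _) = _
    rw [if_pos le_rfl, sub_self]
    ring
  · exact if_neg (not_le.2 h)

lemma deriv_concat_left {t : ℝ} (h : t < X.T) (i : α) :
    deriv (fun u => (concat X Y).toFun u i) t = deriv (fun u => X.toFun u i) t := by
  apply Filter.EventuallyEq.deriv_eq
  filter_upwards [Iio_mem_nhds h] with u hu
  exact concat_toFun_left (le_of_lt hu) i

lemma deriv_concat_right {t : ℝ} (h : X.T < t) (i : α) :
    deriv (fun u => (concat X Y).toFun u i) t = deriv (fun u => Y.toFun u i) (t - X.T) := by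
  have h1 : deriv (fun u => (concat X Y).toFun u i) t
      = deriv (fun u => Y.toFun (u - X.T) i + (X.toFun X.T i - Y.toFun 0 i)) t := by
    apply Filter.EventuallyEq.deriv_eq
    filter_upwards [Ioi_mem_nhds h] with u hu
    rw [concat_toFun_right (le_of_lt hu) i]
    ring
  rw [h1, deriv_add_const]
  exact deriv_comp_sub_const (f := fun u => Y.toFun u i) (a := X.T) t

lemma sigRev_concat_left (hX : IsPath X) (w : Word α) :
    ∀ {s : ℝ}, s ∈ Set.Icc 0 X.T →
      sigRev (concat X Y).toFun w s = sigRev X.toFun w s := by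
  induction w with
  | nil => intro s _; rfl
  | cons i w ih =>
    intro s hs
    rw [sigRev_cons, sigRev_cons]
    apply intervalIntegral.integral_congr_ae
    filter_upwards [ae_ne_const X.T] with u hub hmem
    rw [Set.uIoc_of_le hs.1] at hmem
    have hu1 : u ∈ Set.Icc 0 X.T := ⟨hmem.1.le, hmem.2.trans hs.2⟩
    have hult : u < X.T := lt_of_le_of_ne hu1.2 hub
    rw [ih hu1, deriv_concat_left hult]

end Concat
section Chen

variable {α : Type*} {X Y : RawPath α}

/-- Chen's relation for the part of the concatenation beyond time `X.T`. -/
lemma sigRev_concat_right (hX : IsPath X) (hY : IsPath Y) (w : Word α) :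
    ∀ {t : ℝ}, t ∈ Set.Icc X.T (X.T + Y.T) →
      sigRev (concat X Y).toFun w t =
        ∑ k ∈ Finset.range (w.length + 1),
          sigRev Y.toFun (w.take k) (t - X.T) * sigRev X.toFun (w.drop k) X.T := by
  induction w with
  | nil =>
    intro t _
    simp [sigRev_nil]
  | cons i w ih =>
    intro t ht
    have hT0 : (0:ℝ) ≤ X.T := hX.1.le
    have ht0 : X.T ≤ t := ht.1
    have htY : t - X.T ∈ Set.Icc 0 Y.T := ⟨by linarith, by linarith [ht.2]⟩
    have intYk : ∀ k, IntervalIntegrable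
        (fun u => sigRev Y.toFun (w.take k) u * deriv (fun v => Y.toFun v i) u)
        volume 0 (t - X.T) :=
      fun k => sigRev_intervalIntegrable hY (w.take k) i (Set.left_mem_Icc.2 hY.1.le) htY
    have intF : IntervalIntegrable (fun u => ∑ k ∈ Finset.range (w.length + 1),
        (sigRev Y.toFun (w.take k) u * deriv (fun v => Y.toFun v i) u)
          * sigRev X.toFun (w.drop k) X.T) volume 0 (t - X.T) := by
      have heq : (fun u => ∑ k ∈ Finset.range (w.length + 1),
          (sigRev Y.toFun (w.take k) u * deriv (fun v => Y.toFun v i) u)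
            * sigRev X.toFun (w.drop k) X.T)
          = ∑ k ∈ Finset.range (w.length + 1), fun u =>
            (sigRev Y.toFun (w.take k) u * deriv (fun v => Y.toFun v i) u)
              * sigRev X.toFun (w.drop k) X.T := by
        funext u
        rw [Finset.sum_apply]
      rw [heq]
      exact IntervalIntegrable.sum _ fun k _ => ((intYk k).mul_const _)
    have hgZF : ∀ u ∈ Set.Ioc X.T t,
        sigRev (concat X Y).toFun w u * deriv (fun v => (concat X Y).toFun v i) u
          = ∑ k ∈ Finset.range (w.length + 1),
            (sigRev Y.toFun (w.take k) (u - X.T) * deriv (fun v => Y.toFun v i) (u - X.T))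
              * sigRev X.toFun (w.drop k) X.T := by
      intro u hmem
      have hu : u ∈ Set.Icc X.T (X.T + Y.T) := ⟨hmem.1.le, hmem.2.trans ht.2⟩
      rw [ih hu, deriv_concat_right hmem.1, Finset.sum_mul]
      exact Finset.sum_congr rfl fun k _ => by ring
    have int1 : IntervalIntegrable
        (fun s => sigRev (concat X Y).toFun w s * deriv (fun v => (concat X Y).toFun v i) s)
        volume 0 X.T := by
      apply ((sigRev_aux hX w).2 i).congr_ae
      rw [Filter.EventuallyEq, MeasureTheory.ae_restrict_iff' measurableSet_uIoc]
      filter_upwards [ae_ne_const X.T] with u hub hmem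
      rw [Set.uIoc_of_le hT0] at hmem
      have hu1 : u ∈ Set.Icc 0 X.T := ⟨hmem.1.le, hmem.2⟩
      show sigRev X.toFun w u * deriv (fun v => X.toFun v i) u = _
      rw [sigRev_concat_left (Y := Y) hX w hu1,
        deriv_concat_left (lt_of_le_of_ne hmem.2 hub)]
    have int2 : IntervalIntegrable
        (fun s => sigRev (concat X Y).toFun w s * deriv (fun v => (concat X Y).toFun v i) s)
        volume X.T t := by
      have h := intF.comp_sub_right X.T
      rw [zero_add, sub_add_cancel] at h
      apply h.congr_ae
      rw [Filter.EventuallyEq, MeasureTheory.ae_restrict_iff' measurableSet_uIoc]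
      filter_upwards with u hmem
      rw [Set.uIoc_of_le ht0] at hmem
      exact (hgZF u hmem).symm
    have e1 : (∫ s in (0:ℝ)..X.T,
          sigRev (concat X Y).toFun w s * deriv (fun v => (concat X Y).toFun v i) s)
        = sigRev X.toFun (i :: w) X.T := by
      rw [← sigRev_cons]
      exact sigRev_concat_left hX (i :: w) ⟨hT0, le_rfl⟩
    have e2 : (∫ s in X.T..t,
          sigRev (concat X Y).toFun w s * deriv (fun v => (concat X Y).toFun v i) s)
        = ∑ k ∈ Finset.range (w.length + 1),
          sigRev Y.toFun (i :: w.take k) (t - X.T) * sigRev X.toFun (w.drop k) X.T := by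
      have hcongr : (∫ s in X.T..t,
            sigRev (concat X Y).toFun w s * deriv (fun v => (concat X Y).toFun v i) s)
          = ∫ s in X.T..t, ∑ k ∈ Finset.range (w.length + 1),
              (sigRev Y.toFun (w.take k) (s - X.T) * deriv (fun v => Y.toFun v i) (s - X.T))
                * sigRev X.toFun (w.drop k) X.T := by
        apply intervalIntegral.integral_congr_ae
        filter_upwards with u hmem
        rw [Set.uIoc_of_le ht0] at hmem
        exact hgZF u hmem
      rw [hcongr]
      rw [intervalIntegral.integral_comp_sub_right (fun u => ∑ k ∈ Finset.range (w.length + 1),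
        (sigRev Y.toFun (w.take k) u * deriv (fun v => Y.toFun v i) u)
          * sigRev X.toFun (w.drop k) X.T) X.T]
      rw [sub_self, intervalIntegral.integral_finset_sum (fun k _ => ((intYk k).mul_const _))]
      refine Finset.sum_congr rfl fun k _ => ?_
      rw [intervalIntegral.integral_mul_const, ← sigRev_cons]
    rw [sigRev_cons, ← intervalIntegral.integral_add_adjacent_intervals int1 int2, e1, e2,
      List.length_cons]
    conv_rhs => rw [Finset.sum_range_succ']
    simp only [List.take_succ_cons, List.drop_succ_cons, List.take_zero, List.drop_zero,
      sigRev_nil, one_mul]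
    ring

/-- Chen's identity for the signature of a concatenation. -/
lemma sig_concat (hX : IsPath X) (hY : IsPath Y) (w : Word α) :
    sig (concat X Y) w = ∑ k ∈ Finset.range (w.length + 1),
      sig X (w.take k) * sig Y (w.drop k) := by
  have h := sigRev_concat_right hX hY w.reverse
    (t := X.T + Y.T) ⟨le_add_of_nonneg_right hY.1.le, le_rfl⟩
  have hZT : (concat X Y).T = X.T + Y.T := rfl
  show sigRev (concat X Y).toFun w.reverse (concat X Y).T = _
  rw [hZT, h, add_sub_cancel_left, List.length_reverse]
  have hre : ∀ k, sigRev Y.toFun (w.reverse.take k) Y.T * sigRev X.toFun (w.reverse.drop k) X.T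
      = sig X (w.take (w.length - k)) * sig Y (w.drop (w.length - k)) := by
    intro k
    rw [List.take_reverse, List.drop_reverse]
    show sigRev Y.toFun (w.drop (w.length - k)).reverse Y.T
        * sigRev X.toFun (w.take (w.length - k)).reverse X.T = _
    rw [mul_comm]
    rfl
  rw [Finset.sum_congr rfl fun k _ => hre k]
  have := Finset.sum_range_reflect
    (fun j => sig X (w.take j) * sig Y (w.drop j)) (w.length + 1)
  simpa using this

end Chen

section Alg

variable {α : Type*} {X Y : RawPath α}

lemma mem_Idl_iff {M : Set (RawPath α)} {x : TA α} :
    x ∈ Idl M ↔ ∀ Z ∈ M, pair Z x = 0 := by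
  simp only [Idl, Submodule.mem_iInf, LinearMap.mem_ker]
  rfl

lemma pair_single (Z : RawPath α) (w : Word α) :
    pair Z (Finsupp.single w (1 : ℝ)) = sig Z w := by
  simp [pair, Finsupp.linearCombination_single]

lemma pair_concat_rightAct (hX : IsPath X) (hY : IsPath Y) (x : TA α) :
    pair (concat X Y) x = pair X (rightAct (sig Y) x) := by
  unfold rightAct
  rw [show pair X = (Finsupp.linearCombination ℝ (sig X) : TA α →ₗ[ℝ] ℝ) from rfl]
  rw [map_finsuppSum]
  unfold pair
  rw [Finsupp.linearCombination_apply]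
  apply Finsupp.sum_congr
  intro w _
  rw [_root_.map_smul, map_sum]
  rw [sig_concat hX hY w]
  congr 1
  refine Finset.sum_congr rfl fun k _ => ?_
  rw [_root_.map_smul, Finsupp.linearCombination_single, one_smul, smul_eq_mul, mul_comm]

lemma pair_concat_leftAct (hX : IsPath X) (hY : IsPath Y) (x : TA α) :
    pair (concat X Y) x = pair Y (leftAct (sig X) x) := by
  unfold leftAct
  rw [show pair Y = (Finsupp.linearCombination ℝ (sig Y) : TA α →ₗ[ℝ] ℝ) from rfl]
  rw [map_finsuppSum]
  unfold pair
  rw [Finsupp.linearCombination_apply]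
  apply Finsupp.sum_congr
  intro w _
  rw [_root_.map_smul, map_sum]
  rw [sig_concat hX hY w]
  congr 1
  refine Finset.sum_congr rfl fun k _ => ?_
  rw [_root_.map_smul, Finsupp.linearCombination_single, one_smul, smul_eq_mul, mul_comm]

end Alg

section IsPathConcat

variable {α : Type*} {X Y : RawPath α}

private lemma continuousOn_union_closed {f : ℝ → ℝ} {s t : Set ℝ} (hs : IsClosed s)
    (ht : IsClosed t) (hfs : ContinuousOn f s) (hft : ContinuousOn f t) :
    ContinuousOn f (s ∪ t) := by
  intro x hx
  rcases hx with hxs | hxt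
  · by_cases hxt : x ∈ t
    · exact (hfs x hxs).union (hft x hxt)
    · exact ((hfs x hxs).union
        (continuousWithinAt_of_notMem_closure (by rwa [ht.closure_eq])))
  · by_cases hxs : x ∈ s
    · exact (hfs x hxs).union (hft x hxt)
    · exact ((continuousWithinAt_of_notMem_closure (by rwa [hs.closure_eq])).union
        (hft x hxt))

lemma IsPath.concat (hX : IsPath X) (hY : IsPath Y) : IsPath (PathVarieties.concat X Y) := by
  obtain ⟨hXT, hXc, n, τ, hτm, hτ0, hτl, hτC⟩ := hX
  obtain ⟨hYT, hYc, m, σ, hσm, hσ0, hσl, hσC⟩ := hY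
  have hm : 0 < m := by
    rcases Nat.eq_zero_or_pos m with h | h
    · subst h
      rw [show (Fin.last 0) = 0 from rfl, hσ0] at hσl
      linarith
    · exact h
  have hZT : (PathVarieties.concat X Y).T = X.T + Y.T := rfl
  have hσ0' : ∀ j : Fin (m + 1), (0:ℝ) ≤ σ j := by
    intro j
    rw [← hσ0]
    exact hσm.monotone (Fin.zero_le _)
  set g : α → ℝ → ℝ := fun i t => Y.toFun (t - X.T) i + X.toFun X.T i - Y.toFun 0 i with hg
  have hgeq : ∀ (i : α) {t : ℝ}, X.T ≤ t → (PathVarieties.concat X Y).toFun t i = g i t :=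
    fun i t ht => concat_toFun_right ht i
  refine ⟨by rw [hZT]; linarith, ?_, n + m, fun k =>
    if h : (k : ℕ) ≤ n then τ ⟨k, Nat.lt_succ_of_le h⟩
    else X.T + σ ⟨(k : ℕ) - n, by have := k.isLt; omega⟩, ?_, ?_, ?_, ?_⟩
  · -- continuity
    intro i
    have hgcont : ContinuousOn (g i) (Set.Icc X.T (X.T + Y.T)) := by
      apply ContinuousOn.sub ?_ continuousOn_const
      apply ContinuousOn.add ?_ continuousOn_const
      apply (hYc i).comp (continuous_id.sub continuous_const).continuousOn
      intro t ht
      exact ⟨by simp; linarith [ht.1], by simp; linarith [ht.2]⟩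
    have hsplit : Set.Icc (0:ℝ) ((PathVarieties.concat X Y).T)
        = Set.Icc 0 X.T ∪ Set.Icc X.T (X.T + Y.T) := by
      rw [hZT, Set.Icc_union_Icc_eq_Icc hXT.le (by linarith)]
    rw [hsplit]
    apply continuousOn_union_closed isClosed_Icc isClosed_Icc
    · exact (hXc i).congr fun t ht => concat_toFun_left ht.2 i
    · exact hgcont.congr fun t ht => hgeq i ht.1
  · -- strict monotonicity
    rw [Fin.strictMono_iff_lt_succ]
    intro k
    have hk := k.isLt
    simp only [Fin.coe_castSucc, Fin.val_succ]
    rcases le_or_gt ((k : ℕ) + 1) n with h1 | h1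
    · rw [dif_pos (by omega : (k:ℕ) ≤ n), dif_pos h1]
      exact hτm (Fin.mk_lt_mk.2 (by omega))
    · rcases le_or_gt ((k : ℕ)) n with h2 | h2
      · have hkn : (k : ℕ) = n := by omega
        rw [dif_pos h2, dif_neg (by omega)]
        have e1 : τ ⟨(k : ℕ), Nat.lt_succ_of_le h2⟩ = X.T := by
          rw [show (⟨(k : ℕ), Nat.lt_succ_of_le h2⟩ : Fin (n + 1)) = Fin.last n from
            Fin.ext (by simp [hkn]), hτl]
        rw [e1]
        have h3 : σ 0 < σ ⟨(k : ℕ) + 1 - n, by omega⟩ := hσm (by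
          rw [Fin.lt_def]; simp; omega)
        rw [hσ0] at h3
        linarith
      · rw [dif_neg (by omega), dif_neg (by omega)]
        have h3 : σ ⟨(k : ℕ) - n, by omega⟩ < σ ⟨(k : ℕ) + 1 - n, by omega⟩ :=
          hσm (Fin.mk_lt_mk.2 (by omega))
        linarith
  · -- starts at 0
    simp only [Fin.val_zero]
    simp only [Nat.zero_le, ↓reduceDIte]
    rw [show (⟨0, Nat.lt_succ_of_le (Nat.zero_le n)⟩ : Fin (n + 1)) = 0 from rfl]
    exact hτ0
  · -- ends at T
    simp only [Fin.val_last]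
    rw [dif_neg (by omega)]
    rw [hZT]
    congr 1
    rw [show (⟨n + m - n, by omega⟩ : Fin (m + 1)) = Fin.last m from Fin.ext (by simp), hσl]
  · -- piecewise C¹
    intro k i
    have hk := k.isLt
    simp only [Fin.coe_castSucc, Fin.val_succ]
    have common : ∀ j : ℕ, ∀ hj : j < m,
        ContDiffOn ℝ 1 (fun t => (PathVarieties.concat X Y).toFun t i)
          (Set.Icc (X.T + σ ⟨j, by omega⟩) (X.T + σ ⟨j + 1, by omega⟩)) := by
      intro j hj
      have hC := hσC ⟨j, hj⟩ i
      have hgC : ContDiffOn ℝ 1 (g i)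
          (Set.Icc (X.T + σ ⟨j, by omega⟩) (X.T + σ ⟨j + 1, by omega⟩)) := by
        apply ContDiffOn.sub ?_ contDiffOn_const
        apply ContDiffOn.add ?_ contDiffOn_const
        apply ContDiffOn.comp hC ((contDiff_id.sub contDiff_const).contDiffOn)
        intro t ht
        exact ⟨by simp; linarith [ht.1], by simp; linarith [ht.2]⟩
      apply hgC.congr
      intro t ht
      exact hgeq i (le_trans (by linarith [hσ0' ⟨j, by omega⟩]) ht.1)
    rcases le_or_gt ((k : ℕ) + 1) n with h1 | h1
    · -- X piece
      rw [dif_pos (by omega : (k:ℕ) ≤ n), dif_pos h1]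
      have hup : τ ⟨(k : ℕ) + 1, by omega⟩ ≤ X.T := by
        rw [← hτl]
        exact hτm.monotone (by rw [Fin.le_def]; simp; omega)
      refine (hτC ⟨(k : ℕ), by omega⟩ i).congr fun t ht => ?_
      exact concat_toFun_left (le_trans ht.2 hup) i
    · -- Y piece
      have e2 : (if h : (k : ℕ) + 1 ≤ n then τ ⟨(k:ℕ)+1, Nat.lt_succ_of_le h⟩
          else X.T + σ ⟨(k : ℕ) + 1 - n, by omega⟩) = X.T + σ ⟨(k:ℕ) - n + 1, by omega⟩ := by
        rw [dif_neg (by omega)]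
        congr 1
        exact congrArg σ (Fin.ext (by simp; omega))
      have e1 : (if h : (k : ℕ) ≤ n then τ ⟨(k:ℕ), Nat.lt_succ_of_le h⟩
          else X.T + σ ⟨(k : ℕ) - n, by omega⟩) = X.T + σ ⟨(k:ℕ) - n, by omega⟩ := by
        rcases le_or_gt ((k : ℕ)) n with h2 | h2
        · have hkn : (k : ℕ) = n := by omega
          rw [dif_pos h2]
          rw [show (⟨(k : ℕ), Nat.lt_succ_of_le h2⟩ : Fin (n + 1)) = Fin.last n from
            Fin.ext (by simp [hkn]), hτl]
          rw [show (⟨(k:ℕ) - n, by omega⟩ : Fin (m + 1)) = 0 from Fin.ext (by simp; omega),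
            hσ0, add_zero]
        · rw [dif_neg (by omega)]
      rw [e1, e2]
      exact common ((k : ℕ) - n) (by omega)

end IsPathConcat

/-- If a set `U` of paths is closed under concatenation, then its
Zariski closure `𝒱(ℐ(U))` is closed under concatenation. -/
theorem statement17 {d : ℕ} (U : Set (RawPath (Fin d)))
    (hpath : ∀ X ∈ U, IsPath X)
    (hconc : ∀ X ∈ U, ∀ Y ∈ U, concat X Y ∈ U) :
    ∀ X Y : RawPath (Fin d),
      X ∈ V (Idl U : Set (TA (Fin d))) → Y ∈ V (Idl U : Set (TA (Fin d))) →
        concat X Y ∈ V (Idl U : Set (TA (Fin d))) := by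
  intro X Y hXV hYV
  obtain ⟨hXp, hXk⟩ := hXV
  obtain ⟨hYp, hYk⟩ := hYV
  refine ⟨hXp.concat hYp, ?_⟩
  intro x hx
  have step1 : ∀ x ∈ Idl U, ∀ B ∈ U, pair (concat X B) x = 0 := by
    intro x hx B hB
    rw [pair_concat_rightAct hXp (hpath B hB)]
    apply hXk
    rw [SetLike.mem_coe, mem_Idl_iff]
    intro Z hZ
    rw [← pair_concat_rightAct (hpath Z hZ) (hpath B hB)]
    exact (mem_Idl_iff.1 hx) _ (hconc Z hZ B hB)
  rw [pair_concat_leftAct hXp hYp]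
  apply hYk
  rw [SetLike.mem_coe, mem_Idl_iff]
  intro Z hZ
  rw [← pair_concat_leftAct hXp (hpath Z hZ)]
  exact step1 x hx Z hZ

end PathVarieties
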